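/- Let b>0 and for χ∈ℝ and integer k≥0 set S_k(χ)=(1/Γ(b))·∫₀^∞ τ^{b−1}(τ−χ)^k e^{−(τ−χ)²/2} dτ. Then for every integer k≥2 and every χ∈ℝ, S_k(χ) = −χ·S_{k−1}(χ) + (b+k−2)·S_{k−2}(χ) + χ·(k−2)·S_{k−3}(χ), where for k=2 the last term is interpreted as 0. -/

import Mathlib

open MeasureTheory Real Set Filter Topology

lemma aux_abs_le (j : ℕ) (y : ℝ) :
    |y| ^ j * Real.exp (-y ^ 2 / 2) ≤ (j.factorial : ℝ) * Real.exp 1 * Real.exp (-y ^ 2 / 4) := by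
  have h1 : |y| ≤ y ^ 2 / 4 + 1 := by nlinarith [sq_abs y, sq_nonneg (|y| - 2)]
  have h2 : |y| ^ j ≤ (j.factorial : ℝ) * Real.exp (y ^ 2 / 4 + 1) := by
    have := Real.pow_div_factorial_le_exp _ (abs_nonneg y) j
    have h3 : Real.exp |y| ≤ Real.exp (y ^ 2 / 4 + 1) := Real.exp_le_exp.2 h1
    have hf : (0:ℝ) < j.factorial := by positivity
    calc |y| ^ j = (j.factorial : ℝ) * (|y| ^ j / j.factorial) := by field_simp
    _ ≤ (j.factorial : ℝ) * Real.exp |y| := by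
        exact mul_le_mul_of_nonneg_left this hf.le
    _ ≤ (j.factorial : ℝ) * Real.exp (y ^ 2 / 4 + 1) := mul_le_mul_of_nonneg_left h3 hf.le
  calc |y| ^ j * Real.exp (-y ^ 2 / 2)
      ≤ ((j.factorial : ℝ) * Real.exp (y ^ 2 / 4 + 1)) * Real.exp (-y ^ 2 / 2) :=
        mul_le_mul_of_nonneg_right h2 (Real.exp_pos _).le
    _ = (j.factorial : ℝ) * Real.exp 1 * Real.exp (-y ^ 2 / 4) := by
        rw [mul_assoc, ← Real.exp_add, mul_assoc, ← Real.exp_add]; ring_nf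

lemma aux_integrable (b : ℝ) (hb : 0 < b) (χ : ℝ) (j : ℕ) :
    IntegrableOn (fun τ : ℝ => τ ^ (b - 1) * (τ - χ) ^ j * Real.exp (-(τ - χ) ^ 2 / 2))
      (Set.Ioi (0 : ℝ)) := by
  set K : ℝ := (j.factorial : ℝ) * Real.exp 1 * Real.exp (χ ^ 2 / 4) with hK
  have hint : IntegrableOn (fun τ : ℝ => K * (τ ^ (b - 1) * Real.exp (-(1/8) * τ ^ 2)))
      (Set.Ioi (0 : ℝ)) :=
    (integrableOn_rpow_mul_exp_neg_mul_sq (by norm_num : (0:ℝ) < 1/8)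
      (by linarith : (-1:ℝ) < b - 1)).const_mul K
  refine Integrable.mono' hint ?_ ?_
  · refine ContinuousOn.aestronglyMeasurable ?_ measurableSet_Ioi
    refine ContinuousOn.mul (ContinuousOn.mul ?_ ?_) ?_
    · intro x hx
      exact (Real.continuousAt_rpow_const x _ (Or.inl (ne_of_gt hx))).continuousWithinAt
    · fun_prop
    · fun_prop
  · rw [ae_restrict_iff' measurableSet_Ioi]
    filter_upwards with τ hτ
    have hτ0 : (0:ℝ) < τ := hτ
    have hrp : (0:ℝ) ≤ τ ^ (b - 1) := Real.rpow_nonneg hτ0.le _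
    have hnorm : ‖τ ^ (b - 1) * (τ - χ) ^ j * Real.exp (-(τ - χ) ^ 2 / 2)‖
        = τ ^ (b - 1) * (|τ - χ| ^ j * Real.exp (-(τ - χ) ^ 2 / 2)) := by
      rw [norm_mul, norm_mul, Real.norm_eq_abs, Real.norm_eq_abs, Real.norm_eq_abs,
        abs_of_nonneg hrp, abs_of_pos (Real.exp_pos _), abs_pow, mul_assoc]
    rw [hnorm]
    have h1 : |τ - χ| ^ j * Real.exp (-(τ - χ) ^ 2 / 2)
        ≤ (j.factorial : ℝ) * Real.exp 1 * Real.exp (-(τ - χ) ^ 2 / 4) := aux_abs_le j _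
    have h2 : Real.exp (-(τ - χ) ^ 2 / 4) ≤ Real.exp (χ ^ 2 / 4) * Real.exp (-(1/8) * τ ^ 2) := by
      rw [← Real.exp_add]
      exact Real.exp_le_exp.2 (by nlinarith [sq_nonneg (τ - 2 * χ)])
    calc τ ^ (b - 1) * (|τ - χ| ^ j * Real.exp (-(τ - χ) ^ 2 / 2))
        ≤ τ ^ (b - 1) * ((j.factorial : ℝ) * Real.exp 1 * Real.exp (-(τ - χ) ^ 2 / 4)) :=
          mul_le_mul_of_nonneg_left h1 hrp
      _ ≤ τ ^ (b - 1) * ((j.factorial : ℝ) * Real.exp 1 *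
            (Real.exp (χ ^ 2 / 4) * Real.exp (-(1/8) * τ ^ 2))) := by
          refine mul_le_mul_of_nonneg_left ?_ hrp
          exact mul_le_mul_of_nonneg_left h2 (by positivity)
      _ = K * (τ ^ (b - 1) * Real.exp (-(1/8) * τ ^ 2)) := by rw [hK]; ring

lemma aux_tendsto (b : ℝ) (χ : ℝ) (m : ℕ) :
    Tendsto (fun τ : ℝ => τ ^ b * (τ - χ) ^ m * Real.exp (-(τ - χ) ^ 2 / 2)) atTop (𝓝 0) := by
  set K : ℝ := (m.factorial : ℝ) * Real.exp 1 * Real.exp (χ ^ 2 / 4) with hK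
  have hlim : Tendsto (fun τ : ℝ => K * (τ ^ b * Real.exp (-1 * τ))) atTop (𝓝 0) := by
    have := (tendsto_rpow_mul_exp_neg_mul_atTop_nhds_zero b 1 one_pos).const_mul K
    simpa using this
  refine squeeze_zero_norm' ?_ hlim
  filter_upwards [eventually_ge_atTop (8:ℝ)] with τ hτ8
  have hτ0 : (0:ℝ) < τ := by linarith
  have hrp : (0:ℝ) ≤ τ ^ b := Real.rpow_nonneg hτ0.le _
  have hnorm : ‖τ ^ b * (τ - χ) ^ m * Real.exp (-(τ - χ) ^ 2 / 2)‖
      = τ ^ b * (|τ - χ| ^ m * Real.exp (-(τ - χ) ^ 2 / 2)) := by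
    rw [norm_mul, norm_mul, Real.norm_eq_abs, Real.norm_eq_abs, Real.norm_eq_abs,
      abs_of_nonneg hrp, abs_of_pos (Real.exp_pos _), abs_pow, mul_assoc]
  rw [hnorm]
  have h1 : |τ - χ| ^ m * Real.exp (-(τ - χ) ^ 2 / 2)
      ≤ (m.factorial : ℝ) * Real.exp 1 * Real.exp (-(τ - χ) ^ 2 / 4) := aux_abs_le m _
  have h2 : Real.exp (-(τ - χ) ^ 2 / 4) ≤ Real.exp (χ ^ 2 / 4) * Real.exp (-1 * τ) := by
    rw [← Real.exp_add]
    refine Real.exp_le_exp.2 ?_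
    nlinarith [sq_nonneg (τ - 2 * χ)]
  calc τ ^ b * (|τ - χ| ^ m * Real.exp (-(τ - χ) ^ 2 / 2))
      ≤ τ ^ b * ((m.factorial : ℝ) * Real.exp 1 * Real.exp (-(τ - χ) ^ 2 / 4)) :=
        mul_le_mul_of_nonneg_left h1 hrp
    _ ≤ τ ^ b * ((m.factorial : ℝ) * Real.exp 1 * (Real.exp (χ ^ 2 / 4) * Real.exp (-1 * τ))) :=
        mul_le_mul_of_nonneg_left (mul_le_mul_of_nonneg_left h2 (by positivity)) hrp
    _ = K * (τ ^ b * Real.exp (-1 * τ)) := by rw [hK]; ring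

lemma aux_pow (m : ℕ) (x : ℝ) : (m : ℝ) * x ^ (m - 1) * x = (m : ℝ) * x ^ m := by
  cases m with
  | zero => simp
  | succ n => rw [Nat.add_sub_cancel, pow_succ]; ring

noncomputable def S (b : ℝ) (k : ℕ) (χ : ℝ) : ℝ :=
  (1 / Real.Gamma b) *
    ∫ τ in Set.Ioi (0 : ℝ), τ ^ (b - 1) * (τ - χ) ^ k * Real.exp (-(τ - χ) ^ 2 / 2)

theorem S_recurrence (b : ℝ) (hb : 0 < b) (k : ℕ) (hk : 2 ≤ k) (χ : ℝ) :
    S b k χ = -χ * S b (k - 1) χ + (b + k - 2) * S b (k - 2) χ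
      + χ * ((k : ℝ) - 2) * S b (k - 3) χ := by
  obtain ⟨m, rfl⟩ : ∃ m, k = m + 2 := ⟨k - 2, by omega⟩
  set f : ℕ → ℝ → ℝ := fun j τ => τ ^ (b - 1) * (τ - χ) ^ j * Real.exp (-(τ - χ) ^ 2 / 2)
    with hf
  set g : ℝ → ℝ := fun τ => τ ^ b * ((τ - χ) ^ m * Real.exp (-(τ - χ) ^ 2 / 2)) with hg
  set g' : ℝ → ℝ := fun τ =>
    (-(f (m + 2) τ) + (-χ) * f (m + 1) τ) + ((b + m) * f m τ + (χ * m) * f (m - 1) τ) with hg'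
  have i0 := aux_integrable b hb χ m
  have i1 := aux_integrable b hb χ (m + 1)
  have i2 := aux_integrable b hb χ (m + 2)
  have im := aux_integrable b hb χ (m - 1)
  have hderiv : ∀ τ ∈ Set.Ioi (0 : ℝ), HasDerivAt g (g' τ) τ := by
    intro τ hτ
    have hτ0 : (0 : ℝ) < τ := hτ
    have h1 : HasDerivAt (fun t : ℝ => t ^ b) (b * τ ^ (b - 1)) τ :=
      Real.hasDerivAt_rpow_const (Or.inl hτ0.ne')
    have h2 : HasDerivAt (fun t : ℝ => (t - χ) ^ m) ((m : ℝ) * (τ - χ) ^ (m - 1)) τ := by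
      simpa using ((hasDerivAt_id τ).sub_const χ).fun_pow m
    have h3 : HasDerivAt (fun t : ℝ => Real.exp (-(t - χ) ^ 2 / 2))
        (Real.exp (-(τ - χ) ^ 2 / 2) * (-(τ - χ))) τ := by
      have hq : HasDerivAt (fun t : ℝ => -(t - χ) ^ 2 / 2) (-(τ - χ)) τ := by
        have := (((hasDerivAt_id τ).sub_const χ).fun_pow 2).fun_neg.div_const 2
        convert this using 1
        · rfl
        · rfl
        · rfl
        simp [id_eq]
        ring
      exact hq.exp
    have hD := h1.fun_mul (h2.fun_mul h3)
    convert hD using 1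
    · rfl
    · rfl
    have hpow : τ ^ b = τ ^ (b - 1) * τ := by
      nth_rewrite 1 [show b = b - 1 + 1 by ring]
      rw [Real.rpow_add_one hτ0.ne']
    have hm := aux_pow m (τ - χ)
    simp only [hg', hf]
    rw [hpow]
    set E := Real.exp (-(τ - χ) ^ 2 / 2) with hE
    simp only [pow_succ]
    linear_combination (-(τ ^ (b - 1) * E)) * hm
  have hcont : ContinuousWithinAt g (Set.Ici (0 : ℝ)) 0 := by
    have c1 : ContinuousAt (fun t : ℝ => t ^ b) 0 :=
      Real.continuousAt_rpow_const _ _ (Or.inr hb.le)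
    exact (c1.mul (by fun_prop)).continuousWithinAt
  have htend : Tendsto g atTop (𝓝 (0 : ℝ)) := by
    simpa [hg, mul_assoc] using aux_tendsto b χ m
  have hint' : IntegrableOn g' (Set.Ioi (0 : ℝ)) := by
    exact ((i2.neg.add (i1.const_mul (-χ))).add
      ((i0.const_mul (b + m)).add (im.const_mul (χ * m))))
  have key : ∫ τ in Set.Ioi (0 : ℝ), g' τ = 0 - g 0 :=
    integral_Ioi_of_hasDerivAt_of_tendsto hcont hderiv hint' htend
  have hg0 : g 0 = 0 := by
    simp [hg, Real.zero_rpow hb.ne']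
  rw [hg0, sub_zero] at key
  have hsplit : ∫ τ in Set.Ioi (0 : ℝ), g' τ =
      (-(∫ τ in Set.Ioi (0 : ℝ), f (m + 2) τ) + (-χ) * ∫ τ in Set.Ioi (0 : ℝ), f (m + 1) τ)
      + ((b + m) * (∫ τ in Set.Ioi (0 : ℝ), f m τ)
        + (χ * m) * ∫ τ in Set.Ioi (0 : ℝ), f (m - 1) τ) := by
    have eI2 : Integrable (fun τ : ℝ => -(f (m + 2) τ)) (volume.restrict (Set.Ioi 0)) := i2.neg
    have eI1 : Integrable (fun τ : ℝ => (-χ) * f (m + 1) τ) (volume.restrict (Set.Ioi 0)) :=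
      i1.const_mul _
    have eI0 : Integrable (fun τ : ℝ => (b + (m : ℝ)) * f m τ) (volume.restrict (Set.Ioi 0)) :=
      i0.const_mul _
    have eIm : Integrable (fun τ : ℝ => (χ * (m : ℝ)) * f (m - 1) τ)
        (volume.restrict (Set.Ioi 0)) := im.const_mul _
    have eA : Integrable (fun τ : ℝ => -(f (m + 2) τ) + (-χ) * f (m + 1) τ)
        (volume.restrict (Set.Ioi 0)) := eI2.add eI1
    have eB : Integrable (fun τ : ℝ => (b + (m : ℝ)) * f m τ + (χ * (m : ℝ)) * f (m - 1) τ)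
        (volume.restrict (Set.Ioi 0)) := eI0.add eIm
    simp only [hg']
    rw [integral_add eA eB, integral_add eI2 eI1, integral_add eI0 eIm,
      integral_neg, integral_const_mul, integral_const_mul, integral_const_mul]
  rw [hsplit] at key
  simp only [S, show m + 2 - 1 = m + 1 from rfl, show m + 2 - 2 = m from rfl,
    show m + 2 - 3 = m - 1 from rfl]
  push_cast
  linear_combination (-(1 / Real.Gamma b)) * key
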